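/- Let v : ℝ → ℝ be continuously differentiable on [−1, 1]. Then (∫_{−1}^1 v(t)⁴ dt)^{1/4} ≤ (∫_{−1}^1 v(t)² dt)^{1/2} + (∫_{−1}^1 v'(t)² dt)^{1/2}. -/

import Mathlib

open MeasureTheory Set

/-- For `v` continuously differentiable on `[−1, 1]`,
`‖v‖_{L⁴} ≤ ‖v‖_{L²} + ‖v'‖_{L²}`. -/
theorem stmt10 (v v' : ℝ → ℝ)
    (hv' : ∀ t ∈ Set.Icc (-1 : ℝ) 1, HasDerivAt v (v' t) t)
    (hc : ContinuousOn v' (Set.Icc (-1 : ℝ) 1)) :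
    (∫ t in (-1 : ℝ)..1, v t ^ 4) ^ ((1 : ℝ) / 4) ≤
      Real.sqrt (∫ t in (-1 : ℝ)..1, v t ^ 2) + Real.sqrt (∫ t in (-1 : ℝ)..1, v' t ^ 2) := by
  have h11 : (-1 : ℝ) ≤ 1 := by norm_num
  set K : Set ℝ := Set.Icc (-1 : ℝ) 1 with hKdef
  have hK : IsCompact K := isCompact_Icc
  have hKm : MeasurableSet K := measurableSet_Icc
  have hvc : ContinuousOn v K := fun t ht => (hv' t ht).continuousAt.continuousWithinAt
  -- convert interval integrals to set integrals over `K`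
  have hconv : ∀ f : ℝ → ℝ, (∫ t in (-1 : ℝ)..1, f t) = ∫ t in K, f t := by
    intro f
    rw [intervalIntegral.integral_of_le h11, ← MeasureTheory.integral_Icc_eq_integral_Ioc]
  rw [hconv, hconv, hconv]
  set A2 : ℝ := ∫ t in K, v t ^ 2 with hA2def
  set B2 : ℝ := ∫ t in K, v' t ^ 2 with hB2def
  set Q : ℝ := ∫ t in K, v t ^ 4 with hQdef
  set A : ℝ := Real.sqrt A2 with hAdef
  set B : ℝ := Real.sqrt B2 with hBdef
  have hA0 : 0 ≤ A := Real.sqrt_nonneg _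
  have hB0 : 0 ≤ B := Real.sqrt_nonneg _
  have hA20 : 0 ≤ A2 := setIntegral_nonneg hKm fun t _ => sq_nonneg _
  have hB20 : 0 ≤ B2 := setIntegral_nonneg hKm fun t _ => sq_nonneg _
  have hQ0 : 0 ≤ Q := setIntegral_nonneg hKm fun t _ => by positivity
  have hAsq : A ^ 2 = A2 := Real.sq_sqrt hA20
  have hBsq : B ^ 2 = B2 := Real.sq_sqrt hB20
  -- integrability
  have hv2i : IntegrableOn (fun t => v t ^ 2) K := (hvc.pow 2).integrableOn_compact hK
  have hv4i : IntegrableOn (fun t => v t ^ 4) K := (hvc.pow 4).integrableOn_compact hK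
  have hv'2i : IntegrableOn (fun t => v' t ^ 2) K := (hc.pow 2).integrableOn_compact hK
  have hvv'i : IntegrableOn (fun t => |v t| * |v' t|) K :=
    (hvc.abs.mul hc.abs).integrableOn_compact hK
  -- Cauchy–Schwarz: ∫_K |v||v'| ≤ A * B
  have hCS : (∫ t in K, |v t| * |v' t|) ≤ A * B := by
    have hconj : Real.HolderConjugate 2 2 := Real.holderConjugate_iff.mpr ⟨by norm_num, by norm_num⟩
    have hmem : ∀ (f : ℝ → ℝ), ContinuousOn f K →
        MemLp (fun t => |f t|) (ENNReal.ofReal 2) (volume.restrict K) := by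
      intro f hf
      obtain ⟨M, hM⟩ := hK.exists_bound_of_continuousOn hf
      refine memLp_of_bounded (a := (0 : ℝ)) (b := M) ?_
        (hf.aestronglyMeasurable hKm).norm _
      · filter_upwards [ae_restrict_mem hKm] with x hx
        exact ⟨abs_nonneg _, hM x hx⟩
    have := integral_mul_le_Lp_mul_Lq_of_nonneg (μ := volume.restrict K) hconj
      (f := fun t => |v t|) (g := fun t => |v' t|)
      (Filter.Eventually.of_forall fun t => abs_nonneg _)
      (Filter.Eventually.of_forall fun t => abs_nonneg _)
      (hmem v hvc) (hmem v' hc)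
    have e1 : (∫ t in K, |v t| ^ (2 : ℝ)) = A2 := by
      rw [hA2def]; apply setIntegral_congr_fun hKm
      intro t _
      simp [Real.rpow_two, sq_abs]
    have e2 : (∫ t in K, |v' t| ^ (2 : ℝ)) = B2 := by
      rw [hB2def]; apply setIntegral_congr_fun hKm
      intro t _
      simp [Real.rpow_two, sq_abs]
    rw [e1, e2] at this
    calc (∫ t in K, |v t| * |v' t|) ≤ A2 ^ ((1 : ℝ)/2) * B2 ^ ((1 : ℝ)/2) := this
      _ = A * B := by rw [hAdef, hBdef, Real.sqrt_eq_rpow, Real.sqrt_eq_rpow]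
  -- minimum point
  obtain ⟨y, hyK, hymin⟩ := hK.exists_isMinOn ⟨0, by constructor <;> norm_num⟩
    ((hvc.pow 2) : ContinuousOn (fun t => v t ^ 2) K)
  have hy : v y ^ 2 ≤ A2 / 2 := by
    have hKvol : volume K < ⊤ := by
      rw [hKdef, Real.volume_Icc]
      exact ENNReal.ofReal_lt_top
    have h1 : (∫ _ in K, v y ^ 2) ≤ ∫ t in K, v t ^ 2 :=
      setIntegral_mono_on (integrableOn_const hKvol.ne) hv2i hKm
        fun x hx => hymin hx
    have h2 : (∫ _ in K, v y ^ 2) = 2 * v y ^ 2 := by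
      rw [setIntegral_const, hKdef, Real.volume_real_Icc, smul_eq_mul]
      norm_num
    rw [h2] at h1
    linarith
  -- pointwise bound on v^2
  have hsup : ∀ x ∈ K, v x ^ 2 ≤ A2 / 2 + 2 * (A * B) := by
    intro x hxK
    have huIcc : Set.uIcc y x ⊆ K := by
      rw [hKdef, ← Set.uIcc_of_le h11]
      exact Set.uIcc_subset_uIcc (by rwa [Set.uIcc_of_le h11]) (by rwa [Set.uIcc_of_le h11])
    have hftc : (∫ t in y..x, 2 * v t * v' t) = v x ^ 2 - v y ^ 2 := by
      apply intervalIntegral.integral_eq_sub_of_hasDerivAt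
      · intro t ht
        have : HasDerivAt (fun x => v x ^ 2) ((2 : ℕ) * v t ^ (2 - 1) * v' t) t :=
          (hv' t (huIcc ht)).pow 2
        simpa [pow_one, mul_comm, mul_assoc, mul_left_comm] using this
      · have h := (((hvc.mono huIcc).mul (hc.mono huIcc)).intervalIntegrable (μ := volume)).const_mul 2
        simpa [mul_assoc] using h
    have hbound : |∫ t in y..x, 2 * v t * v' t| ≤ 2 * ∫ t in K, |v t| * |v' t| := by
      have h1 : |∫ t in y..x, 2 * v t * v' t| ≤ ∫ t in Set.uIoc y x, 2 * |v t| * |v' t| := by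
        simpa [Real.norm_eq_abs] using
          intervalIntegral.norm_integral_le_integral_norm_uIoc (f := fun t => 2 * v t * v' t)
            (a := y) (b := x) (μ := volume)
      have hsub : Set.uIoc y x ⊆ K := Set.uIoc_subset_uIcc.trans huIcc
      have hint : IntegrableOn (fun t => 2 * |v t| * |v' t|) K :=
        ((continuousOn_const.mul hvc.abs).mul hc.abs).integrableOn_compact hK
      have h2 : (∫ t in Set.uIoc y x, 2 * |v t| * |v' t|) ≤ ∫ t in K, 2 * |v t| * |v' t| := by
        apply setIntegral_mono_set hint
        · exact Filter.Eventually.of_forall fun t => by positivity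
        · exact Filter.Eventually.of_forall hsub
      have h3 : (∫ t in K, 2 * |v t| * |v' t|) = 2 * ∫ t in K, |v t| * |v' t| := by
        rw [← MeasureTheory.integral_const_mul]
        apply setIntegral_congr_fun hKm
        intro t _
        ring
      calc |∫ t in y..x, 2 * v t * v' t| ≤ _ := h1
        _ ≤ _ := h2
        _ = _ := h3
    have : v x ^ 2 - v y ^ 2 ≤ 2 * (A * B) := by
      calc v x ^ 2 - v y ^ 2 = ∫ t in y..x, 2 * v t * v' t := hftc.symm
        _ ≤ |∫ t in y..x, 2 * v t * v' t| := le_abs_self _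
        _ ≤ 2 * ∫ t in K, |v t| * |v' t| := hbound
        _ ≤ 2 * (A * B) := by linarith
    linarith
  -- ∫ v^4 ≤ bound * ∫ v^2
  have hQle : Q ≤ (A2 / 2 + 2 * (A * B)) * A2 := by
    have h1 : Q ≤ ∫ t in K, (A2 / 2 + 2 * (A * B)) * v t ^ 2 := by
      apply setIntegral_mono_on hv4i (hv2i.const_mul _) hKm
      intro x hx
      have h := hsup x hx
      nlinarith [sq_nonneg (v x)]
    rwa [MeasureTheory.integral_const_mul] at h1
  -- conclude
  have hQ4 : Q ≤ (A + B) ^ 4 := by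
    have : (A2 / 2 + 2 * (A * B)) * A2 ≤ (A + B) ^ 4 := by
      rw [← hAsq]
      nlinarith [sq_nonneg A, sq_nonneg B, mul_nonneg hA0 hB0,
        mul_nonneg (mul_nonneg hA0 hA0) (mul_nonneg hA0 hB0),
        mul_nonneg (mul_nonneg hA0 hB0) (mul_nonneg hB0 hB0)]
    linarith
  calc Q ^ ((1 : ℝ) / 4) ≤ ((A + B) ^ 4) ^ ((1 : ℝ) / 4) :=
      Real.rpow_le_rpow hQ0 hQ4 (by norm_num)
    _ = A + B := by
      rw [← Real.rpow_natCast (A + B) 4, ← Real.rpow_mul (by positivity)]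
      norm_num
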